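/- For every 2×2 complex unitary matrix U there exist unique real numbers β₀, β₁, β₂, β₃ with β₀, β₁, β₃ ∈ [0, 2π), β₂ ∈ [0, π/2], and β₁ = 0 whenever β₂ = 0 or β₂ = π/2, such that U equals the matrix with entries U₁₁ = e^{iβ₀}·cos β₂, U₁₂ = i·e^{i(β₀+β₁)}·sin β₂, U₂₁ = i·e^{iβ₃}·sin β₂, U₂₂ = e^{i(β₁+β₃)}·cos β₂. (This is the existence and uniqueness of the right-hand-side parameters in the Euler equation (E2) of the LOpp-calculus.) -/

import Mathlib

open Complex Real

noncomputable def E2rhs (β₀ β₁ β₂ β₃ : ℝ) : Matrix (Fin 2) (Fin 2) ℂ :=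
  !![Complex.exp (Complex.I * β₀) * Real.cos β₂,
     Complex.I * Complex.exp (Complex.I * (β₀ + β₁)) * Real.sin β₂;
     Complex.I * Complex.exp (Complex.I * β₃) * Real.sin β₂,
     Complex.exp (Complex.I * (β₁ + β₃)) * Real.cos β₂]

private lemma two_pi_pos' : (0:ℝ) < 2 * π := by positivity

private lemma angle_exists (z : ℂ) : ∃ θ : ℝ, θ ∈ Set.Ico 0 (2*π) ∧
    Complex.exp (Complex.I * θ) * ‖z‖ = z := by
  set θ := toIcoMod two_pi_pos' 0 (Complex.arg z) with hθ
  refine ⟨θ, ?_, ?_⟩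
  · simpa using toIcoMod_mem_Ico two_pi_pos' 0 (Complex.arg z)
  · obtain ⟨n, hn⟩ : ∃ n : ℤ, Complex.arg z = θ + n • (2*π) :=
      ⟨_, (toIcoMod_add_toIcoDiv_zsmul two_pi_pos' 0 (Complex.arg z)).symm⟩
    rw [zsmul_eq_mul] at hn
    have h1 : Complex.exp (Complex.I * θ) = Complex.exp (Complex.arg z * Complex.I) := by
      rw [hn]
      push_cast
      rw [add_mul, Complex.exp_add]
      rw [show ((n:ℂ) * (2*π)) * Complex.I = n * (2*π*Complex.I) by ring,
        Complex.exp_int_mul_two_pi_mul_I]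
      ring_nf
    rw [h1, mul_comm]
    exact Complex.norm_mul_exp_arg_mul_I z

private lemma angle_unique {θ₁ θ₂ : ℝ} (h₁ : θ₁ ∈ Set.Ico 0 (2*π)) (h₂ : θ₂ ∈ Set.Ico 0 (2*π))
    (h : Complex.exp (Complex.I*θ₁) = Complex.exp (Complex.I*θ₂)) : θ₁ = θ₂ := by
  rw [Complex.exp_eq_exp_iff_exists_int] at h
  obtain ⟨n, hn⟩ := h
  have : (θ₁:ℂ) = θ₂ + n * (2*π) := by
    have h3 : Complex.I * ((θ₁:ℂ) - θ₂ - n*(2*π)) = 0 := by linear_combination hn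
    rcases mul_eq_zero.mp h3 with h | h
    · exact absurd h Complex.I_ne_zero
    · linear_combination h
  have hr : θ₁ = θ₂ + n * (2*π) := by exact_mod_cast this
  have hn0 : n = 0 := by
    rcases h₁ with ⟨ha, hb⟩; rcases h₂ with ⟨hc, hd⟩
    by_contra h0
    rcases lt_or_gt_of_ne h0 with h | h
    · have hn1 : n ≤ -1 := by omega
      have : (n:ℝ) ≤ -1 := by exact_mod_cast hn1
      nlinarith [Real.pi_pos]
    · have : (1:ℝ) ≤ (n:ℝ) := by exact_mod_cast h
      nlinarith [Real.pi_pos]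
  simp [hn0] at hr; exact hr

private lemma abs_exp_I (θ : ℝ) : ‖Complex.exp (Complex.I * θ)‖ = 1 := by
  simp [Complex.norm_exp]

private lemma abs_exp_I2 (θ φ : ℝ) :
    ‖Complex.exp (Complex.I * ((θ:ℂ) + (φ:ℂ)))‖ = 1 := by
  rw [← Complex.ofReal_add]; exact abs_exp_I (θ + φ)

private lemma beta2_eq_zero {β₂ : ℝ} (h : β₂ ∈ Set.Icc 0 (π/2)) (hs : Real.sin β₂ = 0) :
    β₂ = 0 := by
  by_contra h0
  have h1 : 0 < β₂ := lt_of_le_of_ne h.1 (Ne.symm h0)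
  have h2 : β₂ < π := lt_of_le_of_lt h.2 (by linarith [Real.pi_pos])
  exact absurd hs (ne_of_gt (Real.sin_pos_of_pos_of_lt_pi h1 h2))

private lemma beta2_eq_pi_div_two {β₂ : ℝ} (h : β₂ ∈ Set.Icc 0 (π/2)) (hc : Real.cos β₂ = 0) :
    β₂ = π/2 := by
  by_contra h0
  have h2 : β₂ < π/2 := lt_of_le_of_ne h.2 h0
  have : 0 < Real.cos β₂ := Real.cos_pos_of_mem_Ioo ⟨by linarith [Real.pi_pos, h.1], h2⟩
  linarith

private lemma E2_param_unique {β₀ β₁ β₂ β₃ γ₀ γ₁ γ₂ γ₃ : ℝ}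
    (hb0 : β₀ ∈ Set.Ico 0 (2*π)) (hb1 : β₁ ∈ Set.Ico 0 (2*π)) (hb2 : β₂ ∈ Set.Icc 0 (π/2))
    (hb3 : β₃ ∈ Set.Ico 0 (2*π)) (hbc : β₂ = 0 ∨ β₂ = π/2 → β₁ = 0)
    (hg0 : γ₀ ∈ Set.Ico 0 (2*π)) (hg1 : γ₁ ∈ Set.Ico 0 (2*π)) (hg2 : γ₂ ∈ Set.Icc 0 (π/2))
    (hg3 : γ₃ ∈ Set.Ico 0 (2*π)) (hgc : γ₂ = 0 ∨ γ₂ = π/2 → γ₁ = 0)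
    (h : E2rhs β₀ β₁ β₂ β₃ = E2rhs γ₀ γ₁ γ₂ γ₃) :
    β₀ = γ₀ ∧ β₁ = γ₁ ∧ β₂ = γ₂ ∧ β₃ = γ₃ := by
  have h00 := Matrix.ext_iff.2 h 0 0
  have h01 := Matrix.ext_iff.2 h 0 1
  have h10 := Matrix.ext_iff.2 h 1 0
  have h11 := Matrix.ext_iff.2 h 1 1
  simp only [E2rhs, Matrix.cons_val', Matrix.cons_val_zero, Matrix.cons_val_one,
    Matrix.head_cons, Matrix.empty_val', Matrix.cons_val_fin_one, Matrix.head_fin_const,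
    Matrix.of_apply] at h00 h01 h10 h11
  rw [← Complex.ofReal_add, ← Complex.ofReal_add] at h01 h11
  -- β₂ = γ₂
  have hcosb : (0:ℝ) ≤ Real.cos β₂ :=
    Real.cos_nonneg_of_mem_Icc ⟨by linarith [hb2.1, Real.pi_pos], hb2.2⟩
  have hcosg : (0:ℝ) ≤ Real.cos γ₂ :=
    Real.cos_nonneg_of_mem_Icc ⟨by linarith [hg2.1, Real.pi_pos], hg2.2⟩
  have hsinb : (0:ℝ) ≤ Real.sin β₂ :=
    Real.sin_nonneg_of_nonneg_of_le_pi hb2.1 (by linarith [hb2.2, Real.pi_pos])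
  have hsing : (0:ℝ) ≤ Real.sin γ₂ :=
    Real.sin_nonneg_of_nonneg_of_le_pi hg2.1 (by linarith [hg2.2, Real.pi_pos])
  have hcos : Real.cos β₂ = Real.cos γ₂ := by
    have := congrArg (‖·‖) h00
    simpa [map_mul, abs_exp_I, abs_exp_I2, Complex.norm_real, Real.norm_eq_abs, _root_.abs_of_nonneg hcosb,
      _root_.abs_of_nonneg hcosg, -Complex.ofReal_cos, -Complex.ofReal_sin] using this
  have hsin : Real.sin β₂ = Real.sin γ₂ := by
    have := congrArg (‖·‖) h01
    simpa [map_mul, abs_exp_I, abs_exp_I2, Complex.norm_real, Real.norm_eq_abs, _root_.abs_of_nonneg hsinb,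
      _root_.abs_of_nonneg hsing, -Complex.ofReal_cos, -Complex.ofReal_sin] using this
  have hβ₂ : β₂ = γ₂ :=
    Real.injOn_cos ⟨hb2.1, by linarith [hb2.2, Real.pi_pos]⟩
      ⟨hg2.1, by linarith [hg2.2, Real.pi_pos]⟩ hcos
  subst hβ₂
  by_cases hs : Real.sin β₂ = 0
  · -- β₂ = 0
    have hz := beta2_eq_zero hb2 hs
    have hb10 : β₁ = 0 := hbc (Or.inl hz)
    have hg10 : γ₁ = 0 := hgc (Or.inl hz)
    have hc1 : Real.cos β₂ = 1 := by rw [hz]; exact Real.cos_zero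
    have hcne : ((Real.cos β₂ : ℝ) : ℂ) ≠ 0 := by rw [hc1]; norm_num
    have hβ₀ : β₀ = γ₀ := angle_unique hb0 hg0 (mul_right_cancel₀ hcne h00)
    have hβ₃ : β₃ = γ₃ := by
      apply angle_unique hb3 hg3
      have := mul_right_cancel₀ hcne h11
      rw [hb10, hg10] at this
      simpa using this
    exact ⟨hβ₀, hb10.trans hg10.symm, rfl, hβ₃⟩
  · by_cases hc : Real.cos β₂ = 0
    · -- β₂ = π/2
      have hz := beta2_eq_pi_div_two hb2 hc
      have hb10 : β₁ = 0 := hbc (Or.inr hz)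
      have hg10 : γ₁ = 0 := hgc (Or.inr hz)
      have hsne : ((Real.sin β₂ : ℝ) : ℂ) ≠ 0 := Complex.ofReal_ne_zero.2 hs
      have hβ₀ : β₀ = γ₀ := by
        apply angle_unique hb0 hg0
        have := mul_left_cancel₀ Complex.I_ne_zero (mul_right_cancel₀ hsne h01)
        rw [hb10, hg10] at this
        simpa using this
      have hβ₃ : β₃ = γ₃ := by
        apply angle_unique hb3 hg3
        exact mul_left_cancel₀ Complex.I_ne_zero (mul_right_cancel₀ hsne h10)
      exact ⟨hβ₀, hb10.trans hg10.symm, rfl, hβ₃⟩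
    · -- interior case
      have hcne : ((Real.cos β₂ : ℝ) : ℂ) ≠ 0 := Complex.ofReal_ne_zero.2 hc
      have hsne : ((Real.sin β₂ : ℝ) : ℂ) ≠ 0 := Complex.ofReal_ne_zero.2 hs
      have hβ₀ : β₀ = γ₀ := angle_unique hb0 hg0 (mul_right_cancel₀ hcne h00)
      have hβ₃ : β₃ = γ₃ := by
        apply angle_unique hb3 hg3
        exact mul_left_cancel₀ Complex.I_ne_zero (mul_right_cancel₀ hsne h10)
      have hβ₁ : β₁ = γ₁ := by
        apply angle_unique hb1 hg1
        have h2 := mul_left_cancel₀ Complex.I_ne_zero (mul_right_cancel₀ hsne h01)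
        rw [hβ₀] at h2
        have e1 : Complex.I * ((γ₀:ℂ) + β₁) = Complex.I * γ₀ + Complex.I * β₁ := by ring
        have e2 : Complex.I * ((γ₀:ℂ) + γ₁) = Complex.I * γ₀ + Complex.I * γ₁ := by ring
        rw [Complex.ofReal_add, Complex.ofReal_add, e1, e2, Complex.exp_add, Complex.exp_add] at h2
        exact mul_left_cancel₀ (Complex.exp_ne_zero _) h2
      exact ⟨hβ₀, hβ₁, rfl, hβ₃⟩

private lemma matrix_eq_E2 {M : Matrix (Fin 2) (Fin 2) ℂ} {β₀ β₁ β₂ β₃ : ℝ}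
    (h00 : M 0 0 = Complex.exp (Complex.I * β₀) * Real.cos β₂)
    (h01 : M 0 1 = Complex.I * Complex.exp (Complex.I * (β₀ + β₁)) * Real.sin β₂)
    (h10 : M 1 0 = Complex.I * Complex.exp (Complex.I * β₃) * Real.sin β₂)
    (h11 : M 1 1 = Complex.exp (Complex.I * (β₁ + β₃)) * Real.cos β₂) :
    M = E2rhs β₀ β₁ β₂ β₃ := by
  rw [Matrix.eta_fin_two M, h00, h01, h10, h11]; rfl

theorem E2_rhs_exists_unique (U : Matrix.unitaryGroup (Fin 2) ℂ) :
    ∃! β : ℝ × ℝ × ℝ × ℝ,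
      β.1 ∈ Set.Ico 0 (2 * π) ∧
      β.2.1 ∈ Set.Ico 0 (2 * π) ∧
      β.2.2.1 ∈ Set.Icc 0 (π / 2) ∧
      β.2.2.2 ∈ Set.Ico 0 (2 * π) ∧
      (β.2.2.1 = 0 ∨ β.2.2.1 = π / 2 → β.2.1 = 0) ∧
      (U : Matrix (Fin 2) (Fin 2) ℂ) = E2rhs β.1 β.2.1 β.2.2.1 β.2.2.2 := by
  set a := (U : Matrix (Fin 2) (Fin 2) ℂ) 0 0 with ha_def
  set b := (U : Matrix (Fin 2) (Fin 2) ℂ) 0 1 with hb_def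
  set c := (U : Matrix (Fin 2) (Fin 2) ℂ) 1 0 with hc_def
  set d := (U : Matrix (Fin 2) (Fin 2) ℂ) 1 1 with hd_def
  have e11 := Matrix.ext_iff.2 U.2.2 0 0
  have e21 := Matrix.ext_iff.2 U.2.2 1 0
  have f11 := Matrix.ext_iff.2 U.2.1 0 0
  have f22 := Matrix.ext_iff.2 U.2.1 1 1
  simp only [Matrix.mul_apply, Fin.sum_univ_two, Matrix.star_apply, Matrix.one_apply,
    RCLike.star_def, ← ha_def, ← hb_def, ← hc_def, ← hd_def] at e11 e21 f11 f22
  norm_num at e11 e21 f11 f22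
  set r := ‖a‖ with hr_def
  set s := ‖b‖ with hs_def
  have hr0 : 0 ≤ r := norm_nonneg a
  have hs0 : 0 ≤ s := norm_nonneg b
  have haa : a * (starRingEnd ℂ) a = ((r^2 : ℝ) : ℂ) := by
    rw [Complex.mul_conj]; norm_cast; rw [hr_def, Complex.sq_norm]
  have hbb : b * (starRingEnd ℂ) b = ((s^2 : ℝ) : ℂ) := by
    rw [Complex.mul_conj]; norm_cast; rw [hs_def, Complex.sq_norm]
  have hrs : r^2 + s^2 = 1 := by
    have e11' := e11
    rw [haa, hbb, ← Complex.ofReal_add] at e11'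
    exact_mod_cast e11'
  have hc_abs : ‖c‖ = s := by
    have hcc : (starRingEnd ℂ) c * c = ((‖c‖ ^ 2 : ℝ) : ℂ) := by
      rw [mul_comm, Complex.mul_conj]; norm_cast; rw [Complex.sq_norm]
    have hac : (starRingEnd ℂ) a * a = ((r^2 : ℝ) : ℂ) := by rw [mul_comm]; exact haa
    rw [hac, hcc, ← Complex.ofReal_add] at f11
    have h2 : r^2 + ‖c‖ ^2 = 1 := by exact_mod_cast f11
    nlinarith [norm_nonneg c]
  have hd_abs : ‖d‖ = r := by
    have hdd : (starRingEnd ℂ) d * d = ((‖d‖ ^ 2 : ℝ) : ℂ) := by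
      rw [mul_comm, Complex.mul_conj]; norm_cast; rw [Complex.sq_norm]
    have hbc : (starRingEnd ℂ) b * b = ((s^2 : ℝ) : ℂ) := by rw [mul_comm]; exact hbb
    rw [hbc, hdd, ← Complex.ofReal_add] at f22
    have h2 : s^2 + ‖d‖ ^2 = 1 := by exact_mod_cast f22
    nlinarith [norm_nonneg d]
  have hr1 : r ≤ 1 := by nlinarith
  set β₂ := Real.arccos r with hβ₂_def
  have hcos2 : Real.cos β₂ = r := Real.cos_arccos (by linarith) hr1
  have hsin2 : Real.sin β₂ = s := by
    rw [hβ₂_def, Real.sin_arccos, show 1 - r^2 = s^2 by linarith]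
    exact Real.sqrt_sq hs0
  have hmem2 : β₂ ∈ Set.Icc 0 (π/2) :=
    ⟨Real.arccos_nonneg r, Real.arccos_le_pi_div_two.2 hr0⟩
  -- existence
  have hex : ∃ β : ℝ × ℝ × ℝ × ℝ,
      β.1 ∈ Set.Ico 0 (2 * π) ∧ β.2.1 ∈ Set.Ico 0 (2 * π) ∧ β.2.2.1 ∈ Set.Icc 0 (π / 2) ∧
      β.2.2.2 ∈ Set.Ico 0 (2 * π) ∧ (β.2.2.1 = 0 ∨ β.2.2.1 = π / 2 → β.2.1 = 0) ∧
      (U : Matrix (Fin 2) (Fin 2) ℂ) = E2rhs β.1 β.2.1 β.2.2.1 β.2.2.2 := by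
    by_cases hse : s = 0
    · -- b = c = 0, r = 1
      have hb0 : b = 0 := by rwa [hs_def, norm_eq_zero] at hse
      have hc0 : c = 0 := by
        have := hc_abs; rw [hse, norm_eq_zero] at this; exact this
      have hre : r = 1 := by nlinarith
      obtain ⟨β₀, hm0, hβ₀⟩ := angle_exists a
      obtain ⟨β₃, hm3, hβ₃⟩ := angle_exists d
      rw [← hr_def, hre] at hβ₀
      rw [hd_abs, hre] at hβ₃
      refine ⟨(β₀, 0, β₂, β₃), hm0, ⟨le_refl 0, two_pi_pos'⟩, hmem2, hm3, fun _ => rfl, ?_⟩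
      apply matrix_eq_E2
      · show a = _
        dsimp only
        rw [hcos2, hre]; exact hβ₀.symm
      · show b = _
        dsimp only
        rw [hsin2, hse, hb0]; push_cast; ring
      · show c = _
        dsimp only
        rw [hsin2, hse, hc0]; push_cast; ring
      · show d = _
        dsimp only
        rw [hcos2, hre]
        simpa using hβ₃.symm
    · by_cases hre : r = 0
      · -- a = d = 0, s = 1
        have ha0 : a = 0 := by rwa [hr_def, norm_eq_zero] at hre
        have hd0 : d = 0 := by
          have := hd_abs; rw [hre, norm_eq_zero] at this; exact this
        have hse1 : s = 1 := by nlinarith [lt_of_le_of_ne hs0 (Ne.symm hse)]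
        obtain ⟨β₀, hm0, hβ₀⟩ := angle_exists (-(Complex.I*b))
        obtain ⟨β₃, hm3, hβ₃⟩ := angle_exists (-(Complex.I*c))
        have habs_b : ‖-(Complex.I*b)‖ = 1 := by
          simp [← hs_def, hse1]
        have habs_c : ‖-(Complex.I*c)‖ = 1 := by
          simp [hc_abs, hse1]
        rw [habs_b] at hβ₀
        rw [habs_c] at hβ₃
        refine ⟨(β₀, 0, β₂, β₃), hm0, ⟨le_refl 0, two_pi_pos'⟩, hmem2, hm3, fun _ => rfl, ?_⟩
        push_cast at hβ₀ hβ₃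
        apply matrix_eq_E2
        · show a = _
          dsimp only
          rw [hcos2, hre, ha0]; push_cast; ring
        · show b = _
          dsimp only
          rw [hsin2, hse1]
          simp only [Complex.ofReal_zero, add_zero, Complex.ofReal_one, mul_one] at *
          linear_combination (-Complex.I) * hβ₀ + b * Complex.I_mul_I
        · show c = _
          dsimp only
          rw [hsin2, hse1]
          simp only [Complex.ofReal_one, mul_one] at *
          linear_combination (-Complex.I) * hβ₃ + c * Complex.I_mul_I
        · show d = _
          dsimp only
          rw [hcos2, hre, hd0]; push_cast; ring
      · -- generic case
        have hrpos : 0 < r := lt_of_le_of_ne hr0 (Ne.symm hre)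
        have hspos : 0 < s := lt_of_le_of_ne hs0 (Ne.symm hse)
        have hrne : ((r:ℝ):ℂ) ≠ 0 := Complex.ofReal_ne_zero.2 hre
        have hsne : ((s:ℝ):ℂ) ≠ 0 := Complex.ofReal_ne_zero.2 hse
        obtain ⟨β₀, hm0, hβ₀⟩ := angle_exists a
        obtain ⟨β₁, hm1, hβ₁⟩ := angle_exists (-(Complex.I*b) * (starRingEnd ℂ) a)
        obtain ⟨β₃, hm3, hβ₃⟩ := angle_exists (-(Complex.I*c))
        rw [← hr_def] at hβ₀
        have habs1 : ‖-(Complex.I*b) * (starRingEnd ℂ) a‖ = s * r := by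
          simp [← hs_def, ← hr_def]
        have habs3 : ‖-(Complex.I*c)‖ = s := by simp [hc_abs]
        rw [habs1] at hβ₁
        rw [habs3] at hβ₃
        push_cast at hβ₁
        refine ⟨(β₀, β₁, β₂, β₃), hm0, hm1, hmem2, hm3, ?_, ?_⟩
        · dsimp only
          rintro (h2 | h2)
          · exact absurd (hsin2.symm.trans (by rw [h2, Real.sin_zero])) hse
          · exact absurd (hcos2.symm.trans (by rw [h2, Real.cos_pi_div_two])) hre
        have e0 : Complex.exp (Complex.I*β₀) = a / (r:ℂ) := (eq_div_iff hrne).mpr hβ₀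
        have e1 : Complex.exp (Complex.I*β₁) = -(Complex.I*b) * (starRingEnd ℂ) a / ((s:ℂ)*(r:ℂ)) :=
          (eq_div_iff (mul_ne_zero hsne hrne)).mpr hβ₁
        have e3 : Complex.exp (Complex.I*β₃) = -(Complex.I*c) / (s:ℂ) := (eq_div_iff hsne).mpr hβ₃
        have haa' : a * (starRingEnd ℂ) a = (r:ℂ)^2 := by rw [haa]; push_cast; ring
        have hbb' : b * (starRingEnd ℂ) b = (s:ℂ)^2 := by rw [hbb]; push_cast; ring
        apply matrix_eq_E2
        · show a = _
          dsimp only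
          rw [hcos2]; exact hβ₀.symm
        · show b = _
          dsimp only
          rw [hsin2, mul_add Complex.I, Complex.exp_add, e0, e1]
          field_simp
          linear_combination (b*a*(starRingEnd ℂ) a) * Complex.I_mul_I - b * haa'
        · show c = _
          dsimp only
          rw [hsin2]
          linear_combination (-Complex.I) * hβ₃ + c * Complex.I_mul_I
        · show d = _
          dsimp only
          rw [hcos2, mul_add Complex.I, Complex.exp_add, e1, e3]
          field_simp
          linear_combination (-(b*(starRingEnd ℂ) a*c)) * Complex.I_mul_I
            + b * e21 - d * hbb'
  obtain ⟨p, hp⟩ := hex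
  refine ⟨p, hp, ?_⟩
  rintro ⟨q₀, q₁, q₂, q₃⟩ ⟨hq0, hq1, hq2, hq3, hqc, hqU⟩
  obtain ⟨hp0, hp1, hp2, hp3, hpc, hpU⟩ := hp
  obtain ⟨u0, u1, u2, u3⟩ := E2_param_unique hq0 hq1 hq2 hq3 hqc hp0 hp1 hp2 hp3 hpc
    (hqU.symm.trans hpU)
  obtain ⟨p₀, p₁, p₂, p₃⟩ := p
  simp_all
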